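/- arXiv:2603.28484 — 5 statements merged into one kernel-verified Lean document; each statement's English description precedes it below -/
import Mathlib

section
/- Let Φ : ℝ^d × ℝ^n → ℝ be such that y ↦ Φ(x,y) is μ-strongly concave for every x, and x ↦ ∇_y Φ(x,y) is L_{yx}-Lipschitz for every y. Let h : ℝ^n → ℝ ∪ {+∞} be proper, convex, lower semicontinuous. Then the solution map y*(x) = argmax_{y} (Φ(x,y) - h(y)) is single-valued and (L_{yx}/μ)-Lipschitz continuous. -/
open scoped RealInnerProductSpace

lemma aux_usc_max {α : Type*} [TopologicalSpace α] {S : Set α} (hS : IsCompact S)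
    (hne : S.Nonempty) {F : α → EReal} (hF : UpperSemicontinuous F) :
    ∃ a ∈ S, ∀ x ∈ S, F x ≤ F a := by
  by_contra hcon
  push_neg at hcon
  have hclosed : ∀ y : α, IsClosed {x | F y ≤ F x} := by
    intro y
    have : {x | F y ≤ F x} = (F ⁻¹' Set.Iio (F y))ᶜ := by
      ext x; simp [not_lt]
    rw [this]; exact (hF.isOpen_preimage _).isClosed_compl
  have hemp : S ∩ ⋂ (y : S), {x | F y.1 ≤ F x} = ∅ := by
    rw [Set.eq_empty_iff_forall_notMem]
    rintro x ⟨hxS, hx⟩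
    obtain ⟨z, hzS, hz⟩ := hcon x hxS
    exact absurd (Set.mem_iInter.1 hx ⟨z, hzS⟩) (not_le.2 hz)
  obtain ⟨t, ht⟩ := hS.elim_finite_subfamily_closed _ (fun y : S => hclosed y) hemp
  rcases t.eq_empty_or_nonempty with rfl | htne
  · simp at ht
    exact absurd ht hne.ne_empty
  · obtain ⟨b, hbt, hb⟩ := t.exists_max_image (fun y : S => F y) htne
    have hmem : (b : α) ∈ S ∩ ⋂ y ∈ t, {x | F y.1 ≤ F x} :=
      ⟨b.2, Set.mem_iInter₂.2 fun y hy => hb y hy⟩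
    rw [ht] at hmem
    exact hmem

lemma aux_norm_combo {n : ℕ} (a b : EuclideanSpace ℝ (Fin n)) (t : ℝ) :
    ‖t • a + (1 - t) • b‖ ^ 2
      = t * ‖a‖ ^ 2 + (1 - t) * ‖b‖ ^ 2 - t * (1 - t) * ‖a - b‖ ^ 2 := by
  have h1 : t • a + (1 - t) • b = b + t • (a - b) := by
    rw [smul_sub]; module
  have h2 : a = b + (a - b) := by abel
  have e1 : ‖b + t • (a - b)‖ ^ 2
      = ‖b‖ ^ 2 + 2 * (t * ⟪b, a - b⟫) + t ^ 2 * ‖a - b‖ ^ 2 := by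
    rw [norm_add_sq_real, real_inner_smul_right, norm_smul]
    simp [mul_pow, sq_abs]
  have e2 : ‖a‖ ^ 2 = ‖b‖ ^ 2 + 2 * ⟪b, a - b⟫ + ‖a - b‖ ^ 2 := by
    nth_rewrite 1 [h2]
    rw [norm_add_sq_real]
  rw [h1, e1]
  linear_combination -t * e2

/-- Lipschitz continuity of the solution mapping: if `Φ(x,·)` is `μ`-strongly concave for
every `x`, `x ↦ ∇_y Φ(x,y)` is `L_yx`-Lipschitz for every `y`, and `h` is proper convex
l.s.c. (extended-real valued), then `x ↦ argmax_y (Φ(x,y) - h(y))` is single-valued and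
`(L_yx/μ)`-Lipschitz. -/
theorem stmt_3 {d n : ℕ} (Φ : EuclideanSpace ℝ (Fin d) → EuclideanSpace ℝ (Fin n) → ℝ)
    (gradyΦ : EuclideanSpace ℝ (Fin d) → EuclideanSpace ℝ (Fin n) → EuclideanSpace ℝ (Fin n))
    (μ Lyx : ℝ) (hμ : 0 < μ) (hLyx : 0 < Lyx)
    (hgrad : ∀ x y, HasGradientAt (Φ x) (gradyΦ x y) y)
    (hsconc : ∀ x, ConvexOn ℝ Set.univ
      (fun y : EuclideanSpace ℝ (Fin n) => -Φ x y - μ / 2 * ‖y‖ ^ 2))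
    (hlipx : ∀ y x₁ x₂, ‖gradyΦ x₁ y - gradyΦ x₂ y‖ ≤ Lyx * ‖x₁ - x₂‖)
    (h : EuclideanSpace ℝ (Fin n) → EReal)
    (hproper : ∃ y, h y < ⊤) (hnobot : ∀ y, h y ≠ ⊥)
    (hconv : ∀ y₁ y₂ : EuclideanSpace ℝ (Fin n), ∀ t : ℝ, 0 ≤ t → t ≤ 1 →
      h (t • y₁ + (1 - t) • y₂) ≤ (t : EReal) * h y₁ + ((1 - t : ℝ) : EReal) * h y₂)
    (hlsc : LowerSemicontinuous h) :
    ∃ ystar : EuclideanSpace ℝ (Fin d) → EuclideanSpace ℝ (Fin n),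
      (∀ x, IsMaxOn (fun y => (Φ x y : EReal) - h y) Set.univ (ystar x)) ∧
      (∀ x y, IsMaxOn (fun y' => (Φ x y' : EReal) - h y') Set.univ y → y = ystar x) ∧
      LipschitzWith (Lyx / μ).toNNReal ystar := by
  classical
  obtain ⟨y₀, hy₀top⟩ := hproper
  obtain ⟨D, hD_def⟩ : ∃ D : Set (EuclideanSpace ℝ (Fin n)), D = {y | h y ≠ ⊤} := ⟨_, rfl⟩
  have hD_mem : ∀ y, y ∈ D ↔ h y ≠ ⊤ := by intro y; rw [hD_def]; rfl
  have hy₀D : y₀ ∈ D := (hD_mem y₀).mpr hy₀top.ne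
  obtain ⟨f, f_def⟩ : ∃ f : EuclideanSpace ℝ (Fin d) → EuclideanSpace ℝ (Fin n) → ℝ,
      f = fun x y => Φ x y - (h y).toReal := ⟨_, rfl⟩
  have hcoe : ∀ y ∈ D, h y = (((h y).toReal : ℝ) : EReal) := fun y hy =>
    (EReal.coe_toReal ((hD_mem y).mp hy) (hnobot y)).symm
  have hFD : ∀ x, ∀ y ∈ D, ((Φ x y : EReal) - h y) = ((f x y : ℝ) : EReal) := by
    intro x y hy
    rw [f_def, hcoe y hy, ← EReal.coe_sub]
  have hFtop : ∀ x y, y ∉ D → ((Φ x y : EReal) - h y) = ⊥ := by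
    intro x y hy
    rw [show h y = ⊤ from not_not.mp (fun hne => hy ((hD_mem y).mpr hne))]
    exact EReal.sub_top _
  have hbotlt : ∀ x, ∀ y ∈ D, (⊥ : EReal) < (Φ x y : EReal) - h y := by
    intro x y hy; rw [hFD x y hy]; exact EReal.bot_lt_coe _
  -- maximizers are in the domain
  have hmaxD : ∀ x y, IsMaxOn (fun y' => (Φ x y' : EReal) - h y') Set.univ y → y ∈ D := by
    intro x y hmax
    by_contra hy
    have h1 : ((Φ x y₀ : EReal) - h y₀) ≤ ((Φ x y : EReal) - h y) :=
      isMaxOn_iff.mp hmax y₀ (Set.mem_univ y₀)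
    rw [hFtop x y hy] at h1
    exact absurd h1 (not_le.2 (hbotlt x y₀ hy₀D))
  -- the domain is convex and f is strongly concave on it
  have hDmem : ∀ y₁ ∈ D, ∀ y₂ ∈ D, ∀ t : ℝ, 0 ≤ t → t ≤ 1 →
      (t • y₁ + (1 - t) • y₂) ∈ D ∧
        (h (t • y₁ + (1 - t) • y₂)).toReal
          ≤ t * (h y₁).toReal + (1 - t) * (h y₂).toReal := by
    intro y₁ h₁ y₂ h₂ t ht ht1
    have hc := hconv y₁ y₂ t ht ht1
    rw [hcoe y₁ h₁, hcoe y₂ h₂, ← EReal.coe_mul, ← EReal.coe_mul, ← EReal.coe_add] at hc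
    have hne : h (t • y₁ + (1 - t) • y₂) ≠ ⊤ := by
      intro heq
      rw [heq] at hc
      exact EReal.coe_ne_top _ (top_le_iff.mp hc)
    refine ⟨(hD_mem _).mpr hne, ?_⟩
    have := EReal.toReal_le_toReal hc (hnobot _) (EReal.coe_ne_top _)
    simpa only [EReal.toReal_coe] using this
  -- real strong concavity of Φ x
  have hstrong : ∀ x y₁ y₂, ∀ t : ℝ, 0 ≤ t → t ≤ 1 →
      t * Φ x y₁ + (1 - t) * Φ x y₂ + μ / 2 * t * (1 - t) * ‖y₁ - y₂‖ ^ 2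
        ≤ Φ x (t • y₁ + (1 - t) • y₂) := by
    intro x y₁ y₂ t ht ht1
    have hcv := (hsconc x).2 (Set.mem_univ y₁) (Set.mem_univ y₂) ht
      (by linarith : (0:ℝ) ≤ 1 - t) (by ring)
    simp only [smul_eq_mul] at hcv
    rw [aux_norm_combo y₁ y₂ t] at hcv
    linarith
  -- strong concavity of f on D
  have hfconc : ∀ x, ∀ y₁ ∈ D, ∀ y₂ ∈ D, ∀ t : ℝ, 0 ≤ t → t ≤ 1 →
      (t • y₁ + (1 - t) • y₂) ∈ D ∧
        t * f x y₁ + (1 - t) * f x y₂ + μ / 2 * t * (1 - t) * ‖y₁ - y₂‖ ^ 2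
          ≤ f x (t • y₁ + (1 - t) • y₂) := by
    intro x y₁ h₁ y₂ h₂ t ht ht1
    obtain ⟨hzD, hrineq⟩ := hDmem y₁ h₁ y₂ h₂ t ht ht1
    have hs := hstrong x y₁ y₂ t ht ht1
    refine ⟨hzD, ?_⟩
    simp only [f_def]
    linarith
  -- upper semicontinuity of the objective
  have husc : ∀ x, UpperSemicontinuous (fun y => (Φ x y : EReal) - h y) := by
    intro x
    have hΦ : Continuous (Φ x) := by
      rw [continuous_iff_continuousAt]
      intro y
      exact (hgrad x y).hasFDerivAt.differentiableAt.continuousAt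
    have h1 : UpperSemicontinuous (fun y => (Φ x y : EReal)) :=
      (continuous_coe_real_ereal.comp hΦ).upperSemicontinuous
    have h2 : UpperSemicontinuous (fun y => -h y) :=
      continuous_neg.comp_lowerSemicontinuous_antitone hlsc
        fun a b hab => EReal.neg_le_neg_iff.mpr hab
    have h3 : UpperSemicontinuous (fun y => (Φ x y : EReal) + -h y) :=
      h1.add' h2 fun y =>
        EReal.continuousAt_add (Or.inl (EReal.coe_ne_top _)) (Or.inl (EReal.coe_ne_bot _))
    have : (fun y => (Φ x y : EReal) - h y) = fun y => (Φ x y : EReal) + -h y := by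
      funext y; rw [sub_eq_add_neg]
    rw [this]
    exact h3
  -- existence of maximizers
  have hkey : ∀ x, ∃ y, y ∈ D ∧
      IsMaxOn (fun y' => (Φ x y' : EReal) - h y') Set.univ y := by
    intro x
    have husc0 := husc x y₀ ((f x y₀ + 1 : ℝ) : EReal)
      (by show ((Φ x y₀ : ℝ) : EReal) - h y₀ < _
          rw [hFD x y₀ hy₀D]; exact_mod_cast lt_add_one (f x y₀))
    obtain ⟨ε, hε, hball⟩ := Metric.eventually_nhds_iff.mp husc0
    obtain ⟨ε', hε', hε'ε⟩ : ∃ e : ℝ, 0 < e ∧ e < ε := ⟨ε / 2, by positivity, by linarith⟩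
    obtain ⟨B, hB0, hB2⟩ : ∃ B : ℝ, 0 ≤ B ∧ μ * ε' * B = 2 :=
      ⟨2 / (μ * ε'), by positivity, by field_simp⟩
    obtain ⟨R, hR_def⟩ : ∃ R : ℝ, R = ε' + B + 1 := ⟨_, rfl⟩
    have hR : 0 < R := by rw [hR_def]; linarith
    have hε'R : ε' ≤ R := by rw [hR_def]; linarith
    have hcoer : ∀ y, R < ‖y - y₀‖ →
        ((Φ x y : EReal) - h y) < ((Φ x y₀ : EReal) - h y₀) := by
      intro y hy
      by_cases hyD : y ∈ D
      · obtain ⟨r, hr_def⟩ : ∃ r : ℝ, r = ‖y - y₀‖ := ⟨_, rfl⟩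
        rw [← hr_def] at hy
        have hrpos : 0 < r := lt_trans hR hy
        obtain ⟨t, ht0, ht1, htr⟩ : ∃ t : ℝ, 0 < t ∧ t < 1 ∧ t * r = ε' :=
          ⟨ε' / r, by positivity, by rw [div_lt_one hrpos]; linarith,
            by field_simp⟩
        obtain ⟨hzD, hcombo⟩ := hfconc x y hyD y₀ hy₀D t ht0.le ht1.le
        have hzsub : (t • y + (1 - t) • y₀) - y₀ = t • (y - y₀) := by
          rw [smul_sub]; module
        have hznorm : dist (t • y + (1 - t) • y₀) y₀ = ε' := by
          rw [dist_eq_norm, hzsub, norm_smul, Real.norm_eq_abs, abs_of_pos ht0,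
            ← hr_def, htr]
        have hFz : ((Φ x (t • y + (1 - t) • y₀) : ℝ) : EReal)
            - h (t • y + (1 - t) • y₀) < ((f x y₀ + 1 : ℝ) : EReal) :=
          hball (by rw [hznorm]; linarith)
        rw [hFD x _ hzD] at hFz
        have hfz : f x (t • y + (1 - t) • y₀) < f x y₀ + 1 := by exact_mod_cast hFz
        have htprod : t * (1 - t) * r ^ 2 = ε' * (r - ε') := by
          linear_combination (r - t * r - ε') * htr
        have hgain : 1 < μ / 2 * (ε' * (r - ε')) := by
          have hA : 0 < μ * ε' := by positivity
          have hrB : B + 1 < r - ε' := by rw [hR_def] at hy; linarith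
          nlinarith [mul_lt_mul_of_pos_left hrB hA]
        have hmain : t * f x y < t * f x y₀ := by
          have e1 : μ / 2 * t * (1 - t) * ‖y - y₀‖ ^ 2 = μ / 2 * (ε' * (r - ε')) := by
            rw [← hr_def]
            linear_combination μ / 2 * htprod
          rw [e1] at hcombo
          linarith
        have : f x y < f x y₀ := lt_of_mul_lt_mul_left hmain ht0.le
        rw [hFD x y hyD, hFD x y₀ hy₀D]
        exact_mod_cast this
      · rw [hFtop x y hyD]
        exact hbotlt x y₀ hy₀D
    obtain ⟨a, haS, hamax⟩ := aux_usc_max (isCompact_closedBall y₀ R)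
      ⟨y₀, Metric.mem_closedBall_self hR.le⟩ (husc x)
    have hmax : IsMaxOn (fun y' => (Φ x y' : EReal) - h y') Set.univ a := by
      rw [isMaxOn_iff]
      intro y _
      by_cases hyS : y ∈ Metric.closedBall y₀ R
      · exact hamax y hyS
      · have : R < ‖y - y₀‖ := by
          rw [Metric.mem_closedBall, not_le, dist_eq_norm] at hyS
          exact hyS
        exact le_trans (hcoer y this).le (hamax y₀ (Metric.mem_closedBall_self hR.le))
    exact ⟨a, hmaxD x a hmax, hmax⟩
  -- uniqueness
  have huniq : ∀ x y z, IsMaxOn (fun y' => (Φ x y' : EReal) - h y') Set.univ y →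
      IsMaxOn (fun y' => (Φ x y' : EReal) - h y') Set.univ z → y = z := by
    intro x y z hy hz
    have hyD := hmaxD x y hy
    have hzD := hmaxD x z hz
    have h1 : f x y = f x z := by
      have a1 : ((Φ x z : EReal) - h z) ≤ ((Φ x y : EReal) - h y) :=
        isMaxOn_iff.mp hy z (Set.mem_univ z)
      have a2 : ((Φ x y : EReal) - h y) ≤ ((Φ x z : EReal) - h z) :=
        isMaxOn_iff.mp hz y (Set.mem_univ y)
      rw [hFD x y hyD, hFD x z hzD] at a1 a2
      exact le_antisymm (by exact_mod_cast a2) (by exact_mod_cast a1)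
    obtain ⟨hmD, hmid⟩ := hfconc x y hyD z hzD (1/2) (by norm_num) (by norm_num)
    have h2 : f x ((1/2 : ℝ) • y + (1 - 1/2 : ℝ) • z) ≤ f x y := by
      have a3 : ((Φ x ((1/2 : ℝ) • y + (1 - 1/2 : ℝ) • z) : EReal)
          - h ((1/2 : ℝ) • y + (1 - 1/2 : ℝ) • z)) ≤ ((Φ x y : EReal) - h y) :=
        isMaxOn_iff.mp hy _ (Set.mem_univ ((1/2 : ℝ) • y + (1 - 1/2 : ℝ) • z))
      rw [hFD x _ hmD, hFD x y hyD] at a3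
      exact_mod_cast a3
    have h3 : μ * ‖y - z‖ ^ 2 ≤ μ * 0 := by nlinarith
    have h4 : ‖y - z‖ ^ 2 ≤ 0 := le_of_mul_le_mul_left h3 hμ
    have h5 : ‖y - z‖ ^ 2 = 0 := le_antisymm h4 (sq_nonneg _)
    have h6 : ‖y - z‖ = 0 := pow_eq_zero_iff (by norm_num : (2:ℕ) ≠ 0) |>.mp h5
    exact sub_eq_zero.mp (norm_eq_zero.mp h6)
  -- quadratic growth at the maximizer
  have hqg : ∀ x ys, IsMaxOn (fun y' => (Φ x y' : EReal) - h y') Set.univ ys →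
      ∀ y ∈ D, f x y + μ / 2 * ‖y - ys‖ ^ 2 ≤ f x ys := by
    intro x ys hmax y hyD
    have hysD := hmaxD x ys hmax
    have key : ∀ t : ℝ, t ∈ Set.Ioo (0:ℝ) 1 →
        f x y + μ / 2 * (1 - t) * ‖y - ys‖ ^ 2 ≤ f x ys := by
      rintro t ⟨ht0, ht1⟩
      obtain ⟨hzD, hineq⟩ := hfconc x y hyD ys hysD t ht0.le ht1.le
      have h2 : f x (t • y + (1 - t) • ys) ≤ f x ys := by
        have a3 : ((Φ x (t • y + (1 - t) • ys) : EReal) - h (t • y + (1 - t) • ys))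
            ≤ ((Φ x ys : EReal) - h ys) :=
          isMaxOn_iff.mp hmax _ (Set.mem_univ (t • y + (1 - t) • ys))
        rw [hFD x _ hzD, hFD x ys hysD] at a3
        exact_mod_cast a3
      have h3 : t * (f x y + μ / 2 * (1 - t) * ‖y - ys‖ ^ 2 - f x ys) ≤ t * 0 := by
        nlinarith
      have h4 := le_of_mul_le_mul_left h3 ht0
      linarith
    haveI hnb : (nhdsWithin (0:ℝ) (Set.Ioo 0 1)).NeBot := by
      rw [← mem_closure_iff_nhdsWithin_neBot, closure_Ioo (by norm_num : (0:ℝ) ≠ 1),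
        Set.mem_Icc]
      norm_num
    have hcont : Continuous (fun t : ℝ => f x y + μ / 2 * (1 - t) * ‖y - ys‖ ^ 2) :=
      continuous_const.add
        ((continuous_const.mul (continuous_const.sub continuous_id)).mul continuous_const)
    have hlim : Filter.Tendsto (fun t : ℝ => f x y + μ / 2 * (1 - t) * ‖y - ys‖ ^ 2)
        (nhdsWithin 0 (Set.Ioo 0 1))
        (nhds (f x y + μ / 2 * (1 - 0) * ‖y - ys‖ ^ 2)) :=
      (hcont.tendsto 0).mono_left nhdsWithin_le_nhds
    have hfin := le_of_tendsto hlim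
      (Filter.eventually_of_mem self_mem_nhdsWithin fun t ht => key t ht)
    simpa using hfin
  -- mean value bound
  have hmv : ∀ x₁ x₂ a b, |(Φ x₁ b - Φ x₂ b) - (Φ x₁ a - Φ x₂ a)|
      ≤ Lyx * ‖x₁ - x₂‖ * ‖b - a‖ := by
    intro x₁ x₂ a b
    have hder : ∀ y ∈ Set.univ, HasFDerivWithinAt (fun y' => Φ x₁ y' - Φ x₂ y')
        ((InnerProductSpace.toDual ℝ (EuclideanSpace ℝ (Fin n)))
          (gradyΦ x₁ y - gradyΦ x₂ y)) Set.univ y := by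
      intro y _
      have h1 := ((hgrad x₁ y).hasFDerivAt).sub ((hgrad x₂ y).hasFDerivAt)
      rw [map_sub]
      exact h1.hasFDerivWithinAt
    have hbound : ∀ y ∈ Set.univ,
        ‖(InnerProductSpace.toDual ℝ (EuclideanSpace ℝ (Fin n)))
          (gradyΦ x₁ y - gradyΦ x₂ y)‖ ≤ Lyx * ‖x₁ - x₂‖ := by
      intro y _
      rw [LinearIsometryEquiv.norm_map]
      exact hlipx y x₁ x₂
    have := Convex.norm_image_sub_le_of_norm_hasFDerivWithin_le hder hbound
      convex_univ (Set.mem_univ a) (Set.mem_univ b)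
    simpa [Real.norm_eq_abs] using this
  -- Lipschitz bound for maximizers
  have hlip : ∀ x₁ x₂ y₁ y₂, IsMaxOn (fun y' => (Φ x₁ y' : EReal) - h y') Set.univ y₁ →
      IsMaxOn (fun y' => (Φ x₂ y' : EReal) - h y') Set.univ y₂ →
      ‖y₁ - y₂‖ ≤ Lyx / μ * ‖x₁ - x₂‖ := by
    intro x₁ x₂ y₁ y₂ h1 h2
    have hy₁D := hmaxD x₁ y₁ h1
    have hy₂D := hmaxD x₂ y₂ h2
    have q1 := hqg x₁ y₁ h1 y₂ hy₂D
    have q2 := hqg x₂ y₂ h2 y₁ hy₁D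
    rw [show ‖y₂ - y₁‖ = ‖y₁ - y₂‖ from norm_sub_rev _ _] at q1
    have hsum : μ * ‖y₁ - y₂‖ ^ 2 ≤ (Φ x₁ y₁ - Φ x₂ y₁) - (Φ x₁ y₂ - Φ x₂ y₂) := by
      simp only [f_def] at q1 q2
      linarith
    have habs := hmv x₁ x₂ y₂ y₁
    have hfin : μ * ‖y₁ - y₂‖ ^ 2 ≤ Lyx * ‖x₁ - x₂‖ * ‖y₁ - y₂‖ :=
      le_trans hsum (le_trans (le_abs_self _) habs)
    rcases eq_or_lt_of_le (norm_nonneg (y₁ - y₂)) with h0 | h0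
    · rw [← h0]; positivity
    · rw [div_mul_eq_mul_div, le_div_iff₀ hμ]
      nlinarith
  choose ystar hyD hmax using hkey
  refine ⟨ystar, fun x => hmax x, fun x y hy => huniq x y (ystar x) hy (hmax x), ?_⟩
  apply LipschitzWith.of_dist_le_mul
  intro x₁ x₂
  rw [dist_eq_norm, dist_eq_norm, Real.coe_toNNReal _ (by positivity : (0:ℝ) ≤ Lyx / μ)]
  exact hlip x₁ x₂ (ystar x₁) (ystar x₂) (hmax x₁) (hmax x₂)
end

section
/- Under the assumptions that Φ(x,·) is μ-strongly concave with ∇_y Φ(·,y) being L_{yx}-Lipschitz in x, ∇_x Φ(·,y) being L_{xx}-Lipschitz in x and ∇_x Φ(x,·) being L_{xy}-Lipschitz in y, and h proper convex l.s.c., the value function φ(x) = max_y (Φ(x,y) - h(y)) is continuously differentiable with ∇φ(x) = ∇_x Φ(x, y*(x)), and ∇φ is L_φ-Lipschitz with L_φ = L_{xx} + L_{xy}L_{yx}/μ. -/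
open scoped RealInnerProductSpace
open Set

variable {F : Type*} [NormedAddCommGroup F] [InnerProductSpace ℝ F] [CompleteSpace F]

/-- Mean value inequality: difference quotient vs gradient at left endpoint. -/
lemma aux_descent {f : F → ℝ} {g : F → F} (L : ℝ) (hL : 0 ≤ L)
    (hg : ∀ z, HasGradientAt f (g z) z)
    (hlip : ∀ z₁ z₂, ‖g z₁ - g z₂‖ ≤ L * ‖z₁ - z₂‖) (a b : F) :
    |f b - f a - ⟪g a, b - a⟫| ≤ L * ‖b - a‖ ^ 2 := by
  have key := Convex.norm_image_sub_le_of_norm_hasFDerivWithin_le'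
    (f := f) (s := segment ℝ a b) (φ := InnerProductSpace.toDual ℝ F (g a))
    (f' := fun z => InnerProductSpace.toDual ℝ F (g z)) (C := L * ‖b - a‖)
    (fun z _ => (hg z).hasFDerivAt.hasFDerivWithinAt)
    (fun z hz => by
      rw [← map_sub, (InnerProductSpace.toDual ℝ F).norm_map]
      obtain ⟨u, v, hu, hv, huv, rfl⟩ := hz
      have hz : u • a + v • b - a = v • (b - a) := by
        have : u = 1 - v := by linarith
        rw [this]; module
      calc ‖g (u • a + v • b) - g a‖ ≤ L * ‖u • a + v • b - a‖ := hlip _ _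
        _ = L * (v * ‖b - a‖) := by rw [hz, norm_smul, Real.norm_eq_abs, abs_of_nonneg hv]
        _ ≤ L * (1 * ‖b - a‖) := by
            nlinarith [mul_nonneg (mul_nonneg hL (norm_nonneg (b - a)))
              (by linarith : (0:ℝ) ≤ 1 - v)]
        _ = L * ‖b - a‖ := by ring)
    (convex_segment a b) (left_mem_segment ℝ a b) (right_mem_segment ℝ a b)
  rw [InnerProductSpace.toDual_apply_apply] at key
  calc |f b - f a - ⟪g a, b - a⟫| = ‖f b - f a - ⟪g a, b - a⟫‖ := (Real.norm_eq_abs _).symm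
    _ ≤ L * ‖b - a‖ * ‖b - a‖ := key
    _ = L * ‖b - a‖ ^ 2 := by ring

/-- Mean value inequality: Lipschitz bound from a gradient bound. -/
lemma aux_mvt {f : F → ℝ} {g : F → F} (C : ℝ)
    (hg : ∀ z, HasGradientAt f (g z) z) (hbound : ∀ z, ‖g z‖ ≤ C) (a b : F) :
    |f b - f a| ≤ C * ‖b - a‖ := by
  have key := Convex.norm_image_sub_le_of_norm_hasFDerivWithin_le
    (f := f) (s := (univ : Set F))
    (f' := fun z => InnerProductSpace.toDual ℝ F (g z)) (C := C)
    (fun z _ => (hg z).hasFDerivAt.hasFDerivWithinAt)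
    (fun z _ => by rw [(InnerProductSpace.toDual ℝ F).norm_map]; exact hbound z)
    convex_univ (mem_univ a) (mem_univ b)
  simpa [Real.norm_eq_abs] using key


/-- Smoothness of the value function `φ(x) = max_y (Φ(x,y) - h(y))`: under strong concavity
in `y` and block-wise Lipschitz gradients, `φ` is differentiable with
`∇φ(x) = ∇_x Φ(x, y*(x))`, this gradient map is continuous, and it is
`L_φ = L_xx + L_xy L_yx / μ`-Lipschitz. -/
theorem stmt_4 {d n : ℕ} (Φ : EuclideanSpace ℝ (Fin d) → EuclideanSpace ℝ (Fin n) → ℝ)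
    (gradxΦ : EuclideanSpace ℝ (Fin d) → EuclideanSpace ℝ (Fin n) → EuclideanSpace ℝ (Fin d))
    (gradyΦ : EuclideanSpace ℝ (Fin d) → EuclideanSpace ℝ (Fin n) → EuclideanSpace ℝ (Fin n))
    (μ Lxx Lxy Lyx : ℝ) (hμ : 0 < μ) (hLxx : 0 < Lxx) (hLxy : 0 < Lxy) (hLyx : 0 < Lyx)
    (hgradx : ∀ x y, HasGradientAt (fun x' => Φ x' y) (gradxΦ x y) x)
    (hgrady : ∀ x y, HasGradientAt (Φ x) (gradyΦ x y) y)
    (hsconc : ∀ x, ConvexOn ℝ Set.univ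
      (fun y : EuclideanSpace ℝ (Fin n) => -Φ x y - μ / 2 * ‖y‖ ^ 2))
    (hlipyx : ∀ y x₁ x₂, ‖gradyΦ x₁ y - gradyΦ x₂ y‖ ≤ Lyx * ‖x₁ - x₂‖)
    (hlipxx : ∀ y x₁ x₂, ‖gradxΦ x₁ y - gradxΦ x₂ y‖ ≤ Lxx * ‖x₁ - x₂‖)
    (hlipxy : ∀ x y₁ y₂, ‖gradxΦ x y₁ - gradxΦ x y₂‖ ≤ Lxy * ‖y₁ - y₂‖)
    (h : EuclideanSpace ℝ (Fin n) → EReal)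
    (hproper : ∃ y, h y < ⊤) (hnobot : ∀ y, h y ≠ ⊥)
    (hconv : ∀ y₁ y₂ : EuclideanSpace ℝ (Fin n), ∀ t : ℝ, 0 ≤ t → t ≤ 1 →
      h (t • y₁ + (1 - t) • y₂) ≤ (t : EReal) * h y₁ + ((1 - t : ℝ) : EReal) * h y₂)
    (hlsc : LowerSemicontinuous h)
    (ystar : EuclideanSpace ℝ (Fin d) → EuclideanSpace ℝ (Fin n))
    (hmax : ∀ x, IsMaxOn (fun y => (Φ x y : EReal) - h y) Set.univ (ystar x))
    (hfin : ∀ x, h (ystar x) ≠ ⊤)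
    (φ : EuclideanSpace ℝ (Fin d) → ℝ)
    (hφ : ∀ x, φ x = Φ x (ystar x) - (h (ystar x)).toReal) :
    (∀ x, HasGradientAt φ (gradxΦ x (ystar x)) x) ∧
    Continuous (fun x => gradxΦ x (ystar x)) ∧
    LipschitzWith (Lxx + Lxy * Lyx / μ).toNNReal (fun x => gradxΦ x (ystar x)) := by
  -- Real version of the maximality hypothesis.
  have hmaxR : ∀ x y, h y ≠ ⊤ →
      Φ x y - (h y).toReal ≤ Φ x (ystar x) - (h (ystar x)).toReal := by
    intro x y hy
    have hm := isMaxOn_iff.mp (hmax x) y (Set.mem_univ y)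
    rw [show h y = ((h y).toReal : EReal) from (EReal.coe_toReal hy (hnobot y)).symm,
      show h (ystar x) = (((h (ystar x)).toReal : ℝ) : EReal) from
        (EReal.coe_toReal (hfin x) (hnobot _)).symm, ← EReal.coe_sub, ← EReal.coe_sub] at hm
    exact_mod_cast hm
  -- strong concavity combination inequality
  have hscomb : ∀ x (a b : EuclideanSpace ℝ (Fin n)) (t : ℝ), 0 ≤ t → t ≤ 1 →
      t * Φ x a + (1 - t) * Φ x b + μ / 2 * (t * (1 - t)) * ‖a - b‖ ^ 2 ≤
        Φ x (t • a + (1 - t) • b) := by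
    intro x a b t ht0 ht1
    have hsc : StrongConvexOn Set.univ μ (fun y => -Φ x y) :=
      strongConvexOn_iff_convex.mpr (hsconc x)
    have hkey := hsc.2 (Set.mem_univ a) (Set.mem_univ b) ht0
      (by linarith : (0:ℝ) ≤ 1 - t) (by ring)
    simp only [smul_eq_mul] at hkey
    nlinarith [hkey]
  -- quadratic growth at the maximizer
  have hQG : ∀ x z, h z ≠ ⊤ →
      Φ x z - (h z).toReal + μ / 2 * ‖z - ystar x‖ ^ 2 ≤
        Φ x (ystar x) - (h (ystar x)).toReal := by
    intro x z hz
    have key : ∀ t : ℝ, 0 < t → t ≤ 1 →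
        Φ x z - (h z).toReal + μ / 2 * (1 - t) * ‖z - ystar x‖ ^ 2 ≤
          Φ x (ystar x) - (h (ystar x)).toReal := by
      intro t ht0 ht1
      have hcomb := hscomb x z (ystar x) t ht0.le ht1
      have hconv' := hconv z (ystar x) t ht0.le ht1
      have hzR : h z = ((h z).toReal : EReal) := (EReal.coe_toReal hz (hnobot z)).symm
      have hy0R : h (ystar x) = (((h (ystar x)).toReal : ℝ) : EReal) :=
        (EReal.coe_toReal (hfin x) (hnobot _)).symm
      set zt := t • z + (1 - t) • ystar x with hzt
      have hztle : h zt ≤ ((t * (h z).toReal + (1 - t) * (h (ystar x)).toReal : ℝ) : EReal) := by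
        rw [hzR, hy0R] at hconv'
        rw [EReal.coe_add, EReal.coe_mul, EReal.coe_mul]
        exact hconv'
      have hztne : h zt ≠ ⊤ := by
        intro htop
        rw [htop] at hztle
        exact absurd hztle (not_le.mpr (EReal.coe_lt_top _))
      have hztR : (h zt).toReal ≤ t * (h z).toReal + (1 - t) * (h (ystar x)).toReal := by
        rw [show h zt = ((h zt).toReal : EReal) from
          (EReal.coe_toReal hztne (hnobot _)).symm] at hztle
        exact_mod_cast hztle
      have hmz := hmaxR x zt hztne
      have h1 : t * (Φ x z - (h z).toReal + μ / 2 * (1 - t) * ‖z - ystar x‖ ^ 2) ≤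
          t * (Φ x (ystar x) - (h (ystar x)).toReal) := by nlinarith
      exact (mul_le_mul_iff_right₀ ht0).mp h1
    refine le_of_forall_pos_le_add fun ε hε => ?_
    have hc : (0:ℝ) ≤ μ / 2 * ‖z - ystar x‖ ^ 2 := by positivity
    set c := μ / 2 * ‖z - ystar x‖ ^ 2 with hcdef
    set t := min 1 (ε / (c + 1)) with htdef
    have ht0 : 0 < t := lt_min one_pos (div_pos hε (by linarith))
    have ht1 : t ≤ 1 := min_le_left _ _
    have ht2 : t * (c + 1) ≤ ε := (le_div_iff₀ (by linarith)).mp (min_le_right _ _)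
    have htc : t * c ≤ ε := by nlinarith
    have h3 := key t ht0 ht1
    have heq : μ / 2 * (1 - t) * ‖z - ystar x‖ ^ 2 = c - t * c := by rw [hcdef]; ring
    linarith [h3, heq ▸ h3]
  -- Lipschitz continuity of the maximizer
  have hylip : ∀ x₁ x₂, ‖ystar x₁ - ystar x₂‖ ≤ Lyx / μ * ‖x₁ - x₂‖ := by
    intro x₁ x₂
    set y₁ := ystar x₁
    set y₂ := ystar x₂
    have q1 := hQG x₁ y₂ (hfin x₂)
    have q2 := hQG x₂ y₁ (hfin x₁)
    have hmvt : |(Φ x₁ y₁ - Φ x₂ y₁) - (Φ x₁ y₂ - Φ x₂ y₂)| ≤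
        Lyx * ‖x₁ - x₂‖ * ‖y₁ - y₂‖ := by
      have := aux_mvt (f := fun y => Φ x₁ y - Φ x₂ y)
        (g := fun y => gradyΦ x₁ y - gradyΦ x₂ y) (Lyx * ‖x₁ - x₂‖)
        (fun z => by
          have h1 := (hgrady x₁ z).hasFDerivAt
          have h2 := (hgrady x₂ z).hasFDerivAt
          have := h1.sub h2
          rw [← map_sub] at this
          exact hasGradientAt_iff_hasFDerivAt.mpr this)
        (fun z => hlipyx z x₁ x₂) y₂ y₁
      simpa using this
    have hD2 : μ * ‖y₁ - y₂‖ ^ 2 ≤ Lyx * ‖x₁ - x₂‖ * ‖y₁ - y₂‖ := by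
      have e1 : ‖y₂ - y₁‖ = ‖y₁ - y₂‖ := norm_sub_rev _ _
      rw [e1] at q1
      have habs := abs_le.mp hmvt
      nlinarith [q1, q2, habs.2]
    rcases eq_or_lt_of_le (norm_nonneg (y₁ - y₂)) with h0 | h0
    · rw [← h0]; positivity
    · have hstep : μ * ‖y₁ - y₂‖ ≤ Lyx * ‖x₁ - x₂‖ := by nlinarith
      rw [div_mul_eq_mul_div, le_div_iff₀ hμ]
      linarith [hstep]
  set G : EuclideanSpace ℝ (Fin d) → EuclideanSpace ℝ (Fin d) := fun x => gradxΦ x (ystar x)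
    with hG
  set C := Lxx + Lxy * Lyx / μ with hCdef
  have hC0 : 0 < C := by positivity
  -- Lipschitzness of the candidate gradient map
  have hGlip : ∀ x₁ x₂, ‖G x₁ - G x₂‖ ≤ C * ‖x₁ - x₂‖ := by
    intro x₁ x₂
    calc ‖G x₁ - G x₂‖
        ≤ ‖gradxΦ x₁ (ystar x₁) - gradxΦ x₂ (ystar x₁)‖ +
          ‖gradxΦ x₂ (ystar x₁) - gradxΦ x₂ (ystar x₂)‖ := by
          rw [hG]; exact norm_sub_le_norm_sub_add_norm_sub _ _ _
      _ ≤ Lxx * ‖x₁ - x₂‖ + Lxy * ‖ystar x₁ - ystar x₂‖ := by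
          gcongr
          exacts [hlipxx _ x₁ x₂, hlipxy _ _ _]
      _ ≤ Lxx * ‖x₁ - x₂‖ + Lxy * (Lyx / μ * ‖x₁ - x₂‖) := by
          gcongr
          exact hylip x₁ x₂
      _ = C * ‖x₁ - x₂‖ := by rw [hCdef]; ring
  have hlip : LipschitzWith C.toNNReal G := by
    apply LipschitzWith.of_dist_le_mul
    intro x₁ x₂
    rw [dist_eq_norm, dist_eq_norm, Real.coe_toNNReal _ hC0.le]
    exact hGlip x₁ x₂
  -- differentiability
  have hgradφ : ∀ x, HasGradientAt φ (G x) x := by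
    intro x
    have key : ∀ x', |φ x' - φ x - ⟪G x, x' - x⟫| ≤ C * ‖x' - x‖ ^ 2 := by
      intro x'
      set y0 := ystar x with hy0
      set y' := ystar x' with hy'
      have up : φ x' - φ x ≤ Φ x' y' - Φ x y' := by
        have hm := hmaxR x y' (hfin x')
        rw [hφ x, hφ x']
        linarith [hm]
      have lo : Φ x' y0 - Φ x y0 ≤ φ x' - φ x := by
        have hm := hmaxR x' y0 (hfin x)
        rw [hφ x, hφ x']
        linarith [hm]
      have d1 := aux_descent Lxx hLxx.le (fun z => hgradx z y0)
        (fun z₁ z₂ => hlipxx y0 z₁ z₂) x x'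
      have d2 := aux_descent Lxx hLxx.le (fun z => hgradx z y')
        (fun z₁ z₂ => hlipxx y' z₁ z₂) x x'
      have cross : |⟪gradxΦ x y' - gradxΦ x y0, x' - x⟫| ≤
          Lxy * Lyx / μ * ‖x' - x‖ ^ 2 := by
        calc |⟪gradxΦ x y' - gradxΦ x y0, x' - x⟫|
            ≤ ‖gradxΦ x y' - gradxΦ x y0‖ * ‖x' - x‖ := abs_real_inner_le_norm _ _
          _ ≤ Lxy * (Lyx / μ * ‖x' - x‖) * ‖x' - x‖ := by
              gcongr
              calc ‖gradxΦ x y' - gradxΦ x y0‖ ≤ Lxy * ‖y' - y0‖ := hlipxy x y' y0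
                _ ≤ Lxy * (Lyx / μ * ‖x' - x‖) := by gcongr; exact hylip x' x
          _ = Lxy * Lyx / μ * ‖x' - x‖ ^ 2 := by ring
      have hsplit : ⟪gradxΦ x y', x' - x⟫ = ⟪G x, x' - x⟫ +
          ⟪gradxΦ x y' - gradxΦ x y0, x' - x⟫ := by
        show ⟪gradxΦ x y', x' - x⟫ = ⟪gradxΦ x y0, x' - x⟫ + ⟪gradxΦ x y' - gradxΦ x y0, x' - x⟫
        rw [inner_sub_left]; ring_nf
      have habs1 := abs_le.mp d1
      have habs2 := abs_le.mp d2
      have habs3 := abs_le.mp cross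
      have hq : (0:ℝ) ≤ Lxy * Lyx / μ * ‖x' - x‖ ^ 2 := by positivity
      rw [abs_le, hCdef]
      constructor
      · -- lower bound
        linarith [lo, habs1.1, hq]
      · -- upper bound
        have h4 : Φ x' y' - Φ x y' - ⟪gradxΦ x y', x' - x⟫ ≤ Lxx * ‖x' - x‖ ^ 2 := habs2.2
        rw [hsplit] at h4
        linarith [up, h4, habs3.2]
    rw [hasGradientAt_iff_hasFDerivAt, hasFDerivAt_iff_isLittleO_nhds_zero,
      Asymptotics.isLittleO_iff]
    intro c hc
    filter_upwards [Metric.ball_mem_nhds (0 : EuclideanSpace ℝ (Fin d))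
      (show (0:ℝ) < c / C by positivity)] with v hv
    have hdist : ‖v‖ < c / C := by rwa [mem_ball_zero_iff] at hv
    have hkey := key (x + v)
    rw [add_sub_cancel_left] at hkey
    rw [Real.norm_eq_abs, InnerProductSpace.toDual_apply_apply]
    calc |φ (x + v) - φ x - ⟪G x, v⟫| ≤ C * ‖v‖ ^ 2 := hkey
      _ ≤ c * ‖v‖ := by nlinarith [norm_nonneg v, (le_div_iff₀ hC0).mp hdist.le]
  exact ⟨hgradφ, hlip.continuous, hlip⟩
end

section
/- Let φ be differentiable with L_φ-Lipschitz gradient, and let x_{k+1} = x_k - η_x ∇_x Φ(x_k, y_k), where ∇φ(x_k) = ∇_x Φ(x_k, y*(x_k)) and ‖∇φ(x_k) - ∇_x Φ(x_k,y_k)‖ ≤ L_{xy}‖y*(x_k) - y_k‖. Then for any η_x > 0 and any N ≥ 1: φ(x_N) ≤ φ(x_0) - (η_x/2)(1 - 2L_φ η_x) ∑_{k=0}^{N-1} ‖∇φ(x_k)‖² + (η_x/2)(1 + 2L_φ η_x) L_{xy}² ∑_{k=0}^{N-1} ‖y*(x_k) - y_k‖². -/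
open scoped RealInnerProductSpace

lemma descent_aux {F : Type*} [NormedAddCommGroup F] [InnerProductSpace ℝ F] [CompleteSpace F]
    (φ : F → ℝ) (g : F → F) (L : ℝ)
    (hgrad : ∀ z, HasGradientAt φ (g z) z)
    (hL : 0 ≤ L) (hlip : ∀ z z', ‖g z - g z'‖ ≤ L * ‖z - z'‖) (x y : F) :
    φ y ≤ φ x + ⟪g x, y - x⟫ + L / 2 * ‖y - x‖ ^ 2 := by
  set v := y - x with hv
  have hline : ∀ t : ℝ, HasDerivAt (fun t : ℝ => φ (x + t • v)) ⟪g (x + t • v), v⟫ t := by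
    intro t
    have h1 : HasDerivAt (fun t : ℝ => x + t • v) v t := by
      simpa using ((hasDerivAt_id t).smul_const v).const_add x
    have h2 := ((hgrad (x + t • v)).hasFDerivAt.comp_hasDerivAt t h1)
    simpa [InnerProductSpace.toDual_apply_apply, Function.comp_def] using h2
  have hcont : Continuous fun t : ℝ => ⟪g (x + t • v), v⟫ := by
    have hgc : Continuous g :=
      (LipschitzWith.of_dist_le_mul (K := ⟨L, hL⟩) (fun z z' => by
          rw [dist_eq_norm, dist_eq_norm]; exact hlip z z')).continuous
    exact (hgc.comp (by continuity)).inner continuous_const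
  have hftc : φ (x + (1:ℝ) • v) - φ (x + (0:ℝ) • v)
      = ∫ t in (0:ℝ)..1, ⟪g (x + t • v), v⟫ := by
    rw [intervalIntegral.integral_eq_sub_of_hasDerivAt (fun t _ => hline t)
      (hcont.intervalIntegrable 0 1)]
  have key : ∫ t in (0:ℝ)..1, ⟪g (x + t • v), v⟫ ≤ ⟪g x, v⟫ + L / 2 * ‖v‖ ^ 2 := by
    have hb : ∀ t ∈ Set.Icc (0:ℝ) 1, ⟪g (x + t • v), v⟫ ≤ ⟪g x, v⟫ + L * ‖v‖ ^ 2 * t := by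
      intro t ht
      have h1 : ⟪g (x + t • v) - g x, v⟫ ≤ ‖g (x + t • v) - g x‖ * ‖v‖ :=
        real_inner_le_norm _ _
      have h2 : ‖g (x + t • v) - g x‖ ≤ L * (t * ‖v‖) := by
        have := hlip (x + t • v) x
        simpa [norm_smul, abs_of_nonneg ht.1, mul_assoc] using this
      nlinarith [inner_sub_left (𝕜 := ℝ) (g (x + t • v)) (g x) v, norm_nonneg v,
        mul_le_mul_of_nonneg_right h2 (norm_nonneg v)]
    calc ∫ t in (0:ℝ)..1, ⟪g (x + t • v), v⟫
        ≤ ∫ t in (0:ℝ)..1, (⟪g x, v⟫ + L * ‖v‖ ^ 2 * t) := by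
          apply intervalIntegral.integral_mono_on zero_le_one
            (hcont.intervalIntegrable 0 1)
            (by apply Continuous.intervalIntegrable; continuity) hb
      _ = ⟪g x, v⟫ + L / 2 * ‖v‖ ^ 2 := by
          rw [intervalIntegral.integral_add (by apply Continuous.intervalIntegrable; continuity)
            (by apply Continuous.intervalIntegrable; continuity)]
          rw [intervalIntegral.integral_const_mul, integral_id]
          simp
          ring
  have hxy : x + v = y := by simp [hv]
  have := hftc
  simp only [one_smul, zero_smul, add_zero, hxy] at this
  linarith [key, this.le]

set_option maxHeartbeats 1000000 in
/-- Descent inequality for GD-RGA: with `L_φ`-Lipschitz gradient of `φ`, explicit steps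
`x_{k+1} = x_k - η_x ∇_x Φ(x_k, y_k)`, `∇φ(x_k) = ∇_x Φ(x_k, y*(x_k))` and
`‖∇φ(x_k) - ∇_x Φ(x_k,y_k)‖ ≤ L_xy ‖y*(x_k) - y_k‖`, one has for any `η_x > 0`, `N ≥ 1`:
`φ(x_N) ≤ φ(x_0) - (η_x/2)(1-2L_φη_x) ∑ ‖∇φ(x_k)‖² + (η_x/2)(1+2L_φη_x) L_xy² ∑ ‖y*(x_k)-y_k‖²`. -/
theorem stmt_6 {d n : ℕ} (φ : EuclideanSpace ℝ (Fin d) → ℝ)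
    (gφ : EuclideanSpace ℝ (Fin d) → EuclideanSpace ℝ (Fin d))
    (Φgrad : EuclideanSpace ℝ (Fin d) → EuclideanSpace ℝ (Fin n) → EuclideanSpace ℝ (Fin d))
    (ystar : EuclideanSpace ℝ (Fin d) → EuclideanSpace ℝ (Fin n))
    (Lφ Lxy ηx : ℝ) (hLφ : 0 < Lφ) (hLxy : 0 < Lxy) (hηx : 0 < ηx)
    (hgrad : ∀ z, HasGradientAt φ (gφ z) z)
    (hlip : ∀ z z', ‖gφ z - gφ z'‖ ≤ Lφ * ‖z - z'‖)
    (x : ℕ → EuclideanSpace ℝ (Fin d)) (y : ℕ → EuclideanSpace ℝ (Fin n))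
    (hupdate : ∀ k, x (k + 1) = x k - ηx • Φgrad (x k) (y k))
    (hformula : ∀ k, gφ (x k) = Φgrad (x k) (ystar (x k)))
    (hbound : ∀ k, ‖gφ (x k) - Φgrad (x k) (y k)‖ ≤ Lxy * ‖ystar (x k) - y k‖)
    (N : ℕ) (hN : 1 ≤ N) :
    φ (x N) ≤ φ (x 0)
      - ηx / 2 * (1 - 2 * Lφ * ηx) * ∑ k ∈ Finset.range N, ‖gφ (x k)‖ ^ 2
      + ηx / 2 * (1 + 2 * Lφ * ηx) * Lxy ^ 2
          * ∑ k ∈ Finset.range N, ‖ystar (x k) - y k‖ ^ 2 := by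
  have step : ∀ k, φ (x (k + 1)) ≤ φ (x k)
      - ηx / 2 * (1 - 2 * Lφ * ηx) * ‖gφ (x k)‖ ^ 2
      + ηx / 2 * (1 + 2 * Lφ * ηx) * Lxy ^ 2 * ‖ystar (x k) - y k‖ ^ 2 := by
    intro k
    set g := gφ (x k) with hg
    set h := Φgrad (x k) (y k) with hh
    set e := g - h with he
    have hd := descent_aux φ gφ Lφ hgrad hLφ.le hlip (x k) (x (k + 1))
    have hdiff : x (k + 1) - x k = -(ηx • h) := by rw [hupdate k]; abel
    rw [hdiff] at hd
    have hin : ⟪g, -(ηx • h)⟫ = -(ηx * ⟪g, h⟫) := by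
      rw [inner_neg_right, real_inner_smul_right]
    have hnorm : ‖-(ηx • h)‖ ^ 2 = ηx ^ 2 * ‖h‖ ^ 2 := by
      rw [norm_neg, norm_smul]
      simp [mul_pow, abs_of_pos hηx]
    rw [hin, hnorm] at hd
    have hgh : ⟪g, h⟫ = ‖g‖ ^ 2 - ⟪g, e⟫ := by
      have : h = g - e := by rw [he]; abel
      rw [this, inner_sub_right, real_inner_self_eq_norm_sq]
    have hh2 : ‖h‖ ^ 2 = ‖g‖ ^ 2 - 2 * ⟪g, e⟫ + ‖e‖ ^ 2 := by
      have : h = g - e := by rw [he]; abel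
      rw [this, norm_sub_sq_real]
      try ring
    have habs : |⟪g, e⟫| ≤ ‖g‖ * ‖e‖ := abs_real_inner_le_norm g e
    have he2 : ‖e‖ ^ 2 ≤ Lxy ^ 2 * ‖ystar (x k) - y k‖ ^ 2 := by
      calc ‖e‖ ^ 2 ≤ (Lxy * ‖ystar (x k) - y k‖) ^ 2 :=
            pow_le_pow_left₀ (norm_nonneg _) (hbound k) 2
        _ = Lxy ^ 2 * ‖ystar (x k) - y k‖ ^ 2 := by ring
    rw [hgh, hh2] at hd
    have hs : |⟪g, e⟫| ≤ (‖g‖ ^ 2 + ‖e‖ ^ 2) / 2 := by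
      nlinarith [sq_nonneg (‖g‖ - ‖e‖)]
    have hcabs : |ηx - Lφ * ηx ^ 2| ≤ ηx + Lφ * ηx ^ 2 := by
      rw [abs_sub_comm, abs_le]
      constructor
      · nlinarith [mul_nonneg hLφ.le (sq_nonneg ηx)]
      · nlinarith [hηx.le]
    have hcs : (ηx - Lφ * ηx ^ 2) * ⟪g, e⟫
        ≤ (ηx + Lφ * ηx ^ 2) * ((‖g‖ ^ 2 + ‖e‖ ^ 2) / 2) := by
      calc (ηx - Lφ * ηx ^ 2) * ⟪g, e⟫ ≤ |(ηx - Lφ * ηx ^ 2) * ⟪g, e⟫| := le_abs_self _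
        _ = |ηx - Lφ * ηx ^ 2| * |⟪g, e⟫| := abs_mul _ _
        _ ≤ (ηx + Lφ * ηx ^ 2) * ((‖g‖ ^ 2 + ‖e‖ ^ 2) / 2) :=
            mul_le_mul hcabs hs (abs_nonneg _) (by positivity)
    have hcoef : (0:ℝ) ≤ ηx / 2 + Lφ * ηx ^ 2 := by positivity
    have hE := mul_le_mul_of_nonneg_left he2 hcoef
    linarith only [hd, hcs, hE]
  clear hN
  induction N with
  | zero => simp
  | succ N ih =>
    rw [Finset.sum_range_succ, Finset.sum_range_succ, mul_add, mul_add]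
    linarith [step N, ih]
end

section
/- Let φ be ρ-weakly convex and differentiable, and let x_{k+1} satisfy x_{k+1} - x_k = -η_x ∇_x Φ(x_{k+1}, y_k) (proximal step), with ‖∇φ(x_{k+1}) - ∇_x Φ(x_{k+1}, y_k)‖ ≤ L_{xy}‖y*(x_{k+1}) - y_k‖. Then for any η_x > 0 and N ≥ 1: φ(x_N) ≤ φ(x_0) - (η_x/2)(1 - 2ρη_x) ∑_{k=0}^{N-1} ‖∇φ(x_{k+1})‖² + (η_x/2)(1 + 2ρη_x) L_{xy}² ∑_{k=0}^{N-1} ‖y*(x_{k+1}) - y_k‖². -/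
open scoped RealInnerProductSpace

/-- Descent inequality for PD-RGA: with `φ` `ρ`-weakly convex (upper inequality
`φ(x') ≤ φ(x) + ⟪∇φ(x'), x'-x⟫ + (ρ/2)‖x-x'‖²`), implicit steps
`x_{k+1} - x_k = -η_x ∇_x Φ(x_{k+1}, y_k)` and
`‖∇φ(x_{k+1}) - ∇_x Φ(x_{k+1},y_k)‖ ≤ L_xy ‖y*(x_{k+1}) - y_k‖`, one has for any
`η_x > 0`, `N ≥ 1`:
`φ(x_N) ≤ φ(x_0) - (η_x/2)(1-2ρη_x) ∑ ‖∇φ(x_{k+1})‖² + (η_x/2)(1+2ρη_x) L_xy² ∑ ‖y*(x_{k+1})-y_k‖²`. -/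
theorem stmt_7 {d n : ℕ} (φ : EuclideanSpace ℝ (Fin d) → ℝ)
    (gφ : EuclideanSpace ℝ (Fin d) → EuclideanSpace ℝ (Fin d))
    (Φgrad : EuclideanSpace ℝ (Fin d) → EuclideanSpace ℝ (Fin n) → EuclideanSpace ℝ (Fin d))
    (ystar : EuclideanSpace ℝ (Fin d) → EuclideanSpace ℝ (Fin n))
    (ρ Lxy ηx : ℝ) (hρ : 0 < ρ) (hLxy : 0 < Lxy) (hηx : 0 < ηx)
    (hgrad : ∀ z, HasGradientAt φ (gφ z) z)
    (hwc : ∀ x' x : EuclideanSpace ℝ (Fin d),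
      φ x' ≤ φ x + ⟪gφ x', x' - x⟫ + ρ / 2 * ‖x - x'‖ ^ 2)
    (x : ℕ → EuclideanSpace ℝ (Fin d)) (y : ℕ → EuclideanSpace ℝ (Fin n))
    (hupdate : ∀ k, x (k + 1) - x k = -(ηx • Φgrad (x (k + 1)) (y k)))
    (hbound : ∀ k, ‖gφ (x (k + 1)) - Φgrad (x (k + 1)) (y k)‖
      ≤ Lxy * ‖ystar (x (k + 1)) - y k‖)
    (N : ℕ) (hN : 1 ≤ N) :
    φ (x N) ≤ φ (x 0)
      - ηx / 2 * (1 - 2 * ρ * ηx) * ∑ k ∈ Finset.range N, ‖gφ (x (k + 1))‖ ^ 2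
      + ηx / 2 * (1 + 2 * ρ * ηx) * Lxy ^ 2
          * ∑ k ∈ Finset.range N, ‖ystar (x (k + 1)) - y k‖ ^ 2 := by
  clear hN hgrad
  -- per-step descent inequality
  have key : ∀ k, φ (x (k + 1)) ≤ φ (x k)
      - ηx / 2 * (1 - 2 * ρ * ηx) * ‖gφ (x (k + 1))‖ ^ 2
      + ηx / 2 * (1 + 2 * ρ * ηx) * Lxy ^ 2 * ‖ystar (x (k + 1)) - y k‖ ^ 2 := by
    intro k
    set g := gφ (x (k + 1)) with hg
    set G := Φgrad (x (k + 1)) (y k) with hG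
    have h1 := hwc (x (k + 1)) (x k)
    have hup := hupdate k
    have hb := hbound k
    have hinner : ⟪g, x (k + 1) - x k⟫ = -(ηx * ⟪g, G⟫) := by
      rw [hup, inner_neg_right, real_inner_smul_right]
    have hGe : ⟪g, G⟫ = ‖g‖ ^ 2 - ⟪g, g - G⟫ := by
      rw [inner_sub_right, real_inner_self_eq_norm_sq]; ring
    have hce : ⟪g, g - G⟫ ≤ ‖g‖ * ‖g - G‖ := real_inner_le_norm _ _
    have hnorm : ‖x k - x (k + 1)‖ = ηx * ‖G‖ := by
      rw [← norm_neg, neg_sub, hup, norm_neg, norm_smul, Real.norm_eq_abs,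
        abs_of_pos hηx]
    have hGle : ‖G‖ ≤ ‖g‖ + ‖g - G‖ := by
      calc ‖G‖ = ‖g - (g - G)‖ := by rw [sub_sub_cancel]
        _ ≤ ‖g‖ + ‖g - G‖ := norm_sub_le _ _
    have hn2 : ‖G‖ ^ 2 ≤ (‖g‖ + ‖g - G‖) ^ 2 :=
      pow_le_pow_left₀ (norm_nonneg _) hGle 2
    have hb2 : ‖g - G‖ ^ 2 ≤ (Lxy * ‖ystar (x (k + 1)) - y k‖) ^ 2 :=
      pow_le_pow_left₀ (norm_nonneg _) hb 2
    have hpos1 : (0:ℝ) ≤ ηx / 2 * (1 + 2 * ρ * ηx) := by positivity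
    have hpos2 : (0:ℝ) ≤ ρ / 2 * ηx ^ 2 := by positivity
    have h1' : φ (x (k + 1)) ≤ φ (x k) - ηx * (‖g‖ ^ 2 - ⟪g, g - G⟫)
        + ρ / 2 * (ηx * ‖G‖) ^ 2 := by
      calc φ (x (k + 1))
          ≤ φ (x k) + ⟪g, x (k + 1) - x k⟫ + ρ / 2 * ‖x k - x (k + 1)‖ ^ 2 := h1
        _ = _ := by rw [hinner, hGe, hnorm]; ring
    nlinarith [h1', mul_nonneg hpos1 (sub_nonneg.2 hb2),
      mul_nonneg hpos2 (sub_nonneg.2 hn2),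
      mul_nonneg hηx.le (sub_nonneg.2 hce),
      mul_nonneg hηx.le (sq_nonneg (‖g‖ - ‖g - G‖)),
      mul_nonneg (mul_nonneg (mul_nonneg hρ.le hηx.le) hηx.le)
        (sq_nonneg (‖g‖ - ‖g - G‖)),
      sq_nonneg (‖g‖ - ‖g - G‖), norm_nonneg g, norm_nonneg (g - G)]
  clear hupdate hbound hwc
  induction N with
  | zero => simp
  | succ N ih =>
    have hk := key N
    rw [Finset.sum_range_succ, Finset.sum_range_succ]
    nlinarith [ih]
end

section
/- Let g(x) = 1/2 - x² for |x| ≤ 1/2 and g(x) = (|x|-1)² for |x| > 1/2, and let 0 < η < 1/2. Then the proximal operator of g at a point z ∈ ℝ with step η is given by: prox_{ηg}(z) = z/(1-2η) if |z| ≤ 1/2 - η; prox_{ηg}(z) = (z + 2η)/(1+2η) if z ≥ 1/2 - η; prox_{ηg}(z) = (z - 2η)/(1+2η) if z ≤ -(1/2 - η). -/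
private lemma conv (c X Y Z U V : ℝ) (hc : 0 < c) (h : X*c + Y + Z ≤ U*c + V) :
    X + Y/c + Z/c ≤ U + V/c := by
  rw [← sub_nonneg]
  have e : U + V/c - (X + Y/c + Z/c) = (U*c + V - (X*c + Y + Z))/c := by
    field_simp
  rw [e]
  exact div_nonneg (by linarith) hc.le

private lemma key1 (η w u : ℝ) (hη0 : 0 < η) (hη1 : η < 1/2) (hw : |w| ≤ 1/2) :
    (if |w| ≤ 1/2 then 1/2 - w^2 else (|w|-1)^2) * (2*η) + (w - (1-2*η)*w)^2
      + (1-2*η)*(u-w)^2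
      ≤ (if |u| ≤ 1/2 then 1/2 - u^2 else (|u|-1)^2) * (2*η) + (u - (1-2*η)*w)^2 := by
  rw [if_pos hw]
  by_cases hu : |u| ≤ 1/2
  · rw [if_pos hu]; ring_nf; rfl
  · rw [if_neg hu]
    push_neg at hu
    rcases le_or_gt 0 u with h | h
    · rw [abs_of_nonneg h]
      have hu' : 1/2 < u := by rw [abs_of_nonneg h] at hu; linarith
      nlinarith [mul_nonneg hη0.le (sq_nonneg (u - 1/2))]
    · rw [abs_of_neg h]
      have hu' : u < -(1/2) := by rw [abs_of_neg h] at hu; linarith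
      nlinarith [mul_nonneg hη0.le (sq_nonneg (u + 1/2))]

private lemma key2 (η w u : ℝ) (hη0 : 0 < η) (hη1 : η < 1/2) (hw : 1/2 ≤ w) :
    (if |w| ≤ 1/2 then 1/2 - w^2 else (|w|-1)^2) * (2*η) + (w - ((1+2*η)*w - 2*η))^2
      + (1-2*η)*(u-w)^2
      ≤ (if |u| ≤ 1/2 then 1/2 - u^2 else (|u|-1)^2) * (2*η) + (u - ((1+2*η)*w - 2*η))^2 := by
  have hgw : (if |w| ≤ 1/2 then 1/2 - w^2 else (|w|-1)^2) = (w-1)^2 := by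
    split_ifs with h
    · have h' := (abs_le.mp h).2
      have : w = 1/2 := le_antisymm h' hw
      rw [this]; norm_num
    · rw [abs_of_nonneg (by linarith : (0:ℝ) ≤ w)]
  rw [hgw]
  by_cases hu : |u| ≤ 1/2
  · rw [if_pos hu]
    obtain ⟨hu1, hu2⟩ := abs_le.mp hu
    nlinarith [mul_nonneg (mul_nonneg hη0.le (by linarith : (0:ℝ) ≤ 2*w-1))
        (by linarith : (0:ℝ) ≤ 2*w+1-4*u)]
  · rw [if_neg hu]
    push_neg at hu
    rcases le_or_gt 0 u with h | h
    · rw [abs_of_nonneg h]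
      have hu' : 1/2 < u := by rw [abs_of_nonneg h] at hu; linarith
      nlinarith [mul_nonneg hη0.le (sq_nonneg (u-w))]
    · rw [abs_of_neg h]
      have hu' : u < -(1/2) := by rw [abs_of_neg h] at hu; linarith
      nlinarith [mul_nonneg (mul_nonneg hη0.le (by linarith : (0:ℝ) ≤ 2*w-1))
        (by linarith : (0:ℝ) ≤ 2*w+1-4*u),
        mul_nonneg hη0.le (sq_nonneg (u + 1/2))]

private lemma key3 (η w u : ℝ) (hη0 : 0 < η) (hη1 : η < 1/2) (hw : w ≤ -(1/2)) :
    (if |w| ≤ 1/2 then 1/2 - w^2 else (|w|-1)^2) * (2*η) + (w - ((1+2*η)*w + 2*η))^2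
      + (1-2*η)*(u-w)^2
      ≤ (if |u| ≤ 1/2 then 1/2 - u^2 else (|u|-1)^2) * (2*η) + (u - ((1+2*η)*w + 2*η))^2 := by
  have hgw : (if |w| ≤ 1/2 then 1/2 - w^2 else (|w|-1)^2) = (w+1)^2 := by
    split_ifs with h
    · have h' := (abs_le.mp h).1
      have : w = -(1/2) := le_antisymm hw h'
      rw [this]; norm_num
    · rw [abs_of_nonpos (by linarith : w ≤ 0)]; ring
  rw [hgw]
  by_cases hu : |u| ≤ 1/2
  · rw [if_pos hu]
    obtain ⟨hu1, hu2⟩ := abs_le.mp hu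
    nlinarith [mul_nonneg (mul_nonneg hη0.le (by linarith : (0:ℝ) ≤ -(2*w)-1))
        (by linarith : (0:ℝ) ≤ -(2*w)+1+4*u)]
  · rw [if_neg hu]
    push_neg at hu
    rcases le_or_gt 0 u with h | h
    · rw [abs_of_nonneg h]
      have hu' : 1/2 < u := by rw [abs_of_nonneg h] at hu; linarith
      nlinarith [mul_nonneg (mul_nonneg hη0.le (by linarith : (0:ℝ) ≤ -(2*w)-1))
        (by linarith : (0:ℝ) ≤ -(2*w)+1+4*u),
        mul_nonneg hη0.le (sq_nonneg (u - 1/2))]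
    · rw [abs_of_neg h]
      have hu' : u < -(1/2) := by rw [abs_of_neg h] at hu; linarith
      nlinarith [mul_nonneg hη0.le (sq_nonneg (u-w))]

/-- Closed-form proximal operator of the toy regularizer: for `0 < η < 1/2` and `z ∈ ℝ`,
the (unique) minimizer of `u ↦ g(u) + (u-z)²/(2η)` is `z/(1-2η)` when `|z| ≤ 1/2 - η`,
`(z+2η)/(1+2η)` when `z ≥ 1/2 - η`, and `(z-2η)/(1+2η)` when `z ≤ -(1/2 - η)`. -/
theorem stmt_19 (g : ℝ → ℝ)
    (hg : ∀ x, g x = if |x| ≤ 1 / 2 then 1 / 2 - x ^ 2 else (|x| - 1) ^ 2)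
    (η : ℝ) (hη0 : 0 < η) (hη1 : η < 1 / 2) (z : ℝ) :
    (|z| ≤ 1 / 2 - η →
      IsMinOn (fun u => g u + (u - z) ^ 2 / (2 * η)) Set.univ (z / (1 - 2 * η)) ∧
      ∀ u, IsMinOn (fun u' => g u' + (u' - z) ^ 2 / (2 * η)) Set.univ u →
        u = z / (1 - 2 * η)) ∧
    (z ≥ 1 / 2 - η →
      IsMinOn (fun u => g u + (u - z) ^ 2 / (2 * η)) Set.univ ((z + 2 * η) / (1 + 2 * η)) ∧
      ∀ u, IsMinOn (fun u' => g u' + (u' - z) ^ 2 / (2 * η)) Set.univ u →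
        u = (z + 2 * η) / (1 + 2 * η)) ∧
    (z ≤ -(1 / 2 - η) →
      IsMinOn (fun u => g u + (u - z) ^ 2 / (2 * η)) Set.univ ((z - 2 * η) / (1 + 2 * η)) ∧
      ∀ u, IsMinOn (fun u' => g u' + (u' - z) ^ 2 / (2 * η)) Set.univ u →
        u = (z - 2 * η) / (1 + 2 * η)) := by
  have h2 : (0:ℝ) < 2*η := by linarith
  have h12 : (0:ℝ) < 1 - 2*η := by linarith
  have h12' : (0:ℝ) < 1 + 2*η := by linarith
  refine ⟨fun hz => ?_, fun hz => ?_, fun hz => ?_⟩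
  · -- case 1
    set w := z / (1 - 2*η) with hwdef
    have hz' : z = (1-2*η)*w := by rw [hwdef]; field_simp
    have hwabs : |w| ≤ 1/2 := by
      rw [hwdef, abs_div, abs_of_pos h12, div_le_iff₀ h12]
      linarith
    have hkey : ∀ u, g w + (w - z)^2/(2*η) + (1-2*η)*(u-w)^2/(2*η)
        ≤ g u + (u - z)^2/(2*η) := by
      intro u
      have hp := key1 η w u hη0 hη1 hwabs
      rw [← hz'] at hp
      rw [hg w, hg u]
      have := conv (2*η) _ ((w - z)^2) ((1-2*η)*(u-w)^2) _ ((u - z)^2) h2 hp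
      convert this using 4 <;> norm_num
    have hslack : ∀ u : ℝ, 0 ≤ (1-2*η)*(u-w)^2/(2*η) := fun u =>
      div_nonneg (mul_nonneg h12.le (sq_nonneg _)) h2.le
    constructor
    · rw [isMinOn_univ_iff]
      intro u
      linarith [hkey u, hslack u]
    · intro u hu
      have h1 : g u + (u - z)^2/(2*η) ≤ g w + (w - z)^2/(2*η) :=
        isMinOn_univ_iff.mp hu w
      have h3 : (1-2*η)*(u-w)^2/(2*η) ≤ 0 := by linarith [hkey u]
      rw [div_le_iff₀ h2] at h3
      have h5 : (u-w)^2 = 0 := by nlinarith [sq_nonneg (u-w)]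
      have h6 := pow_eq_zero_iff (two_ne_zero) |>.mp h5
      linarith [sub_eq_zero.mp h6]
  · -- case 2
    set w := (z + 2*η) / (1 + 2*η) with hwdef
    have hz' : z = (1+2*η)*w - 2*η := by rw [hwdef]; field_simp; ring
    have hwge : 1/2 ≤ w := by
      rw [hwdef, le_div_iff₀ h12']
      linarith
    have hkey : ∀ u, g w + (w - z)^2/(2*η) + (1-2*η)*(u-w)^2/(2*η)
        ≤ g u + (u - z)^2/(2*η) := by
      intro u
      have hp := key2 η w u hη0 hη1 hwge
      rw [← hz'] at hp
      rw [hg w, hg u]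
      have := conv (2*η) _ ((w - z)^2) ((1-2*η)*(u-w)^2) _ ((u - z)^2) h2 hp
      convert this using 4 <;> norm_num
    have hslack : ∀ u : ℝ, 0 ≤ (1-2*η)*(u-w)^2/(2*η) := fun u =>
      div_nonneg (mul_nonneg h12.le (sq_nonneg _)) h2.le
    constructor
    · rw [isMinOn_univ_iff]
      intro u
      linarith [hkey u, hslack u]
    · intro u hu
      have h1 : g u + (u - z)^2/(2*η) ≤ g w + (w - z)^2/(2*η) :=
        isMinOn_univ_iff.mp hu w
      have h3 : (1-2*η)*(u-w)^2/(2*η) ≤ 0 := by linarith [hkey u]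
      rw [div_le_iff₀ h2] at h3
      have h5 : (u-w)^2 = 0 := by nlinarith [sq_nonneg (u-w)]
      have h6 := pow_eq_zero_iff (two_ne_zero) |>.mp h5
      linarith [sub_eq_zero.mp h6]
  · -- case 3
    set w := (z - 2*η) / (1 + 2*η) with hwdef
    have hz' : z = (1+2*η)*w + 2*η := by rw [hwdef]; field_simp; ring
    have hwle : w ≤ -(1/2) := by
      rw [hwdef, div_le_iff₀ h12']
      linarith
    have hkey : ∀ u, g w + (w - z)^2/(2*η) + (1-2*η)*(u-w)^2/(2*η)
        ≤ g u + (u - z)^2/(2*η) := by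
      intro u
      have hp := key3 η w u hη0 hη1 hwle
      rw [← hz'] at hp
      rw [hg w, hg u]
      have := conv (2*η) _ ((w - z)^2) ((1-2*η)*(u-w)^2) _ ((u - z)^2) h2 hp
      convert this using 4 <;> norm_num
    have hslack : ∀ u : ℝ, 0 ≤ (1-2*η)*(u-w)^2/(2*η) := fun u =>
      div_nonneg (mul_nonneg h12.le (sq_nonneg _)) h2.le
    constructor
    · rw [isMinOn_univ_iff]
      intro u
      linarith [hkey u, hslack u]
    · intro u hu
      have h1 : g u + (u - z)^2/(2*η) ≤ g w + (w - z)^2/(2*η) :=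
        isMinOn_univ_iff.mp hu w
      have h3 : (1-2*η)*(u-w)^2/(2*η) ≤ 0 := by linarith [hkey u]
      rw [div_le_iff₀ h2] at h3
      have h5 : (u-w)^2 = 0 := by nlinarith [sq_nonneg (u-w)]
      have h6 := pow_eq_zero_iff (two_ne_zero) |>.mp h5
      linarith [sub_eq_zero.mp h6]
end
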